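/- For every permutation π ∈ S_n: S(π) ≤ 2 Σ_{i=1}^{n} cost(p*(i, π(i))). -/

import Mathlib

variable {n : ℕ}

/-- The minimum `φ`-cost over all transposition decompositions of `π`. -/
noncomputable def Mcost (φ : Fin n → Fin n → ℝ) (π : Equiv.Perm (Fin n)) : ℝ :=
  sInf {c : ℝ | ∃ l : List (Fin n × Fin n), (∀ p ∈ l, p.1 ≠ p.2) ∧
    (l.map fun p => Equiv.swap p.1 p.2).prod = π ∧
    (l.map fun p => φ p.1 p.2).sum = c}

/-- The optimized cost `φ*(a,b) = M_φ(swap a b)` for `a ≠ b`, and `φ*(a,a) = 0`. -/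
noncomputable def optCost (φ : Fin n → Fin n → ℝ) (a b : Fin n) : ℝ :=
  if a = b then 0 else Mcost φ (Equiv.swap a b)

/-- `S(σ) = Σ_{i ∈ supp σ} φ*(i, σ i) − max_{i ∈ supp σ} φ*(i, σ i)` for a cycle `σ`. -/
noncomputable def Scost (φ : Fin n → Fin n → ℝ) (σ : Equiv.Perm (Fin n)) : ℝ :=
  (∑ i ∈ σ.support, optCost φ i (σ i)) -
    sSup ((fun i => optCost φ i (σ i)) '' (↑σ.support : Set (Fin n)))

/-- `S(π) = Σ_t S(σ_t)`, the sum over the nontrivial cycles `σ_t` of `π`. -/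
noncomputable def Sperm (φ : Fin n → Fin n → ℝ) (π : Equiv.Perm (Fin n)) : ℝ :=
  ∑ σ ∈ π.cycleFactorsFinset, Scost φ σ

/-- `p` is a path from `a` to `b`: a list of pairwise distinct elements starting
at `a` and ending at `b`. -/
def IsPathList (p : List (Fin n)) (a b : Fin n) : Prop :=
  p.Nodup ∧ p.head? = some a ∧ p.getLast? = some b

/-- The cost of a path: the sum of `φ` over consecutive pairs. -/
noncomputable def pathCost (φ : Fin n → Fin n → ℝ) (p : List (Fin n)) : ℝ :=
  ((p.zip p.tail).map fun q => φ q.1 q.2).sum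

/-- `cost(p*(a,b))`: the minimum cost over all paths from `a` to `b`,
with `cost(p*(a,a)) = 0`. -/
noncomputable def minPathCost (φ : Fin n → Fin n → ℝ) (a b : Fin n) : ℝ :=
  if a = b then 0
  else sInf {c : ℝ | ∃ p : List (Fin n), IsPathList p a b ∧ pathCost φ p = c}

section Aux

variable (φ : Fin n → Fin n → ℝ)

lemma mcostSet_nonneg (hnn : ∀ a b : Fin n, a ≠ b → 0 ≤ φ a b) {π : Equiv.Perm (Fin n)} {c : ℝ}
    (hc : c ∈ {c : ℝ | ∃ l : List (Fin n × Fin n), (∀ p ∈ l, p.1 ≠ p.2) ∧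
      (l.map fun p => Equiv.swap p.1 p.2).prod = π ∧
      (l.map fun p => φ p.1 p.2).sum = c}) : 0 ≤ c := by
  obtain ⟨l, hl, -, rfl⟩ := hc
  apply List.sum_nonneg
  intro x hx
  obtain ⟨q, hq, rfl⟩ := List.mem_map.mp hx
  exact hnn _ _ (hl q hq)

lemma Mcost_nonneg (hnn : ∀ a b : Fin n, a ≠ b → 0 ≤ φ a b) (π : Equiv.Perm (Fin n)) :
    0 ≤ Mcost φ π :=
  Real.sInf_nonneg fun _ hc => mcostSet_nonneg φ hnn hc

lemma Mcost_le (hnn : ∀ a b : Fin n, a ≠ b → 0 ≤ φ a b) {π : Equiv.Perm (Fin n)}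
    (l : List (Fin n × Fin n))
    (h1 : ∀ p ∈ l, p.1 ≠ p.2) (h2 : (l.map fun p => Equiv.swap p.1 p.2).prod = π) :
    Mcost φ π ≤ (l.map fun p => φ p.1 p.2).sum :=
  csInf_le ⟨0, fun _ hc => mcostSet_nonneg φ hnn hc⟩ ⟨l, h1, h2, rfl⟩

lemma optCost_nonneg (hnn : ∀ a b : Fin n, a ≠ b → 0 ≤ φ a b) (a b : Fin n) :
    0 ≤ optCost φ a b := by
  unfold optCost
  split
  · exact le_rfl
  · exact Mcost_nonneg φ hnn _

lemma zip_tail_ne {p : List (Fin n)} (h : p.Nodup) :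
    ∀ q ∈ p.zip p.tail, q.1 ≠ q.2 := by
  induction p with
  | nil => simp
  | cons x t ih =>
    cases t with
    | nil => simp
    | cons c t' =>
      intro q hq
      simp only [List.tail_cons, List.zip_cons_cons, List.mem_cons] at hq
      rcases hq with rfl | hq
      · show x ≠ c
        intro hxc
        exact (List.nodup_cons.mp h).1 (hxc ▸ List.mem_cons_self)
      · exact ih (List.nodup_cons.mp h).2 q hq

lemma pathCost_nonneg (hnn : ∀ a b : Fin n, a ≠ b → 0 ≤ φ a b) {p : List (Fin n)}
    (h : p.Nodup) : 0 ≤ pathCost φ p := by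
  apply List.sum_nonneg
  intro x hx
  obtain ⟨q, hq, rfl⟩ := List.mem_map.mp hx
  exact hnn _ _ (zip_tail_ne h q hq)

lemma pathCost_cons_cons (a c : Fin n) (t : List (Fin n)) :
    pathCost φ (a :: c :: t) = φ a c + pathCost φ (c :: t) := by
  simp [pathCost]

lemma exists_decomp (hnn : ∀ a b : Fin n, a ≠ b → 0 ≤ φ a b) :
    ∀ (p : List (Fin n)) (a b : Fin n), p.Nodup →
    p.head? = some a → p.getLast? = some b → a ≠ b →
    ∃ l : List (Fin n × Fin n), (∀ q ∈ l, q.1 ≠ q.2) ∧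
      (l.map fun q => Equiv.swap q.1 q.2).prod = Equiv.swap a b ∧
      (l.map fun q => φ q.1 q.2).sum ≤ 2 * pathCost φ p := by
  intro p
  induction p with
  | nil => intro a b _ h; simp at h
  | cons x t ih =>
    intro a b hnd hhead hlast hab
    obtain rfl : a = x := by simpa using hhead.symm
    cases t with
    | nil =>
      exact absurd (show a = b by simpa using hlast) hab
    | cons c t' =>
      have hac : a ≠ c := fun h => (List.nodup_cons.mp hnd).1 (h ▸ List.mem_cons_self)
      have hnd' : (c :: t').Nodup := (List.nodup_cons.mp hnd).2
      have hpc : 0 ≤ pathCost φ (c :: t') := pathCost_nonneg φ hnn hnd'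
      have hφac : 0 ≤ φ a c := hnn a c hac
      by_cases hcb : c = b
      · refine ⟨[(a, c)], by simpa using hac, by simp [hcb], ?_⟩
        rw [pathCost_cons_cons]
        simp only [List.map_cons, List.map_nil, List.sum_cons, List.sum_nil, add_zero]
        linarith
      · have hlast' : (c :: t').getLast? = some b := by
          rwa [List.getLast?_cons_cons] at hlast
        obtain ⟨l', hl1, hl2, hl3⟩ := ih c b hnd' rfl hlast' hcb
        refine ⟨(a, c) :: (l' ++ [(a, c)]), ?_, ?_, ?_⟩
        · intro q hq
          rcases List.mem_cons.mp hq with rfl | hq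
          · exact hac
          · rcases List.mem_append.mp hq with hq | hq
            · exact hl1 q hq
            · rw [List.mem_singleton.mp hq]; exact hac
        · simp only [List.map_cons, List.map_append, List.prod_cons, List.prod_append,
            List.map_nil, List.prod_nil, mul_one, hl2]
          rw [← mul_assoc, Equiv.swap_comm a c, Equiv.swap_comm c b,
            Equiv.swap_mul_swap_mul_swap (Ne.symm hcb) (Ne.symm hab)]
        · simp only [List.map_cons, List.map_append, List.sum_cons, List.sum_append,
            List.map_nil, List.sum_nil, add_zero]
          rw [pathCost_cons_cons]
          linarith

lemma optCost_le_two_mul_minPathCost (hnn : ∀ a b : Fin n, a ≠ b → 0 ≤ φ a b) (a b : Fin n) :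
    optCost φ a b ≤ 2 * minPathCost φ a b := by
  rcases eq_or_ne a b with rfl | hab
  · simp [optCost, minPathCost]
  · rw [optCost, minPathCost, if_neg hab, if_neg hab]
    have hne : {c : ℝ | ∃ p : List (Fin n), IsPathList p a b ∧ pathCost φ p = c}.Nonempty := by
      refine ⟨pathCost φ [a, b], [a, b], ⟨by simp [hab], by simp, by simp⟩, rfl⟩
    have hlb : Mcost φ (Equiv.swap a b) / 2 ≤
        sInf {c : ℝ | ∃ p : List (Fin n), IsPathList p a b ∧ pathCost φ p = c} := by
      apply le_csInf hne
      rintro c ⟨p, ⟨hnd, hh, hl⟩, rfl⟩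
      obtain ⟨l, h1, h2, h3⟩ := exists_decomp φ hnn p a b hnd hh hl hab
      have := Mcost_le φ hnn l h1 h2
      linarith
    linarith

end Aux

/-- for every permutation `π`,
`S(π) ≤ 2 Σ_i cost(p*(i, π i))`. -/
theorem stmt14 (φ : Fin n → Fin n → ℝ)
    (hnn : ∀ a b : Fin n, a ≠ b → 0 ≤ φ a b)
    (hsym : ∀ a b : Fin n, φ a b = φ b a)
    (π : Equiv.Perm (Fin n)) :
    Sperm φ π ≤ 2 * ∑ i : Fin n, minPathCost φ i (π i) := by
  have hopt : ∀ a b : Fin n, 0 ≤ optCost φ a b := optCost_nonneg φ hnn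
  -- Step 1: Scost σ ≤ sum over support
  have step1 : ∀ σ ∈ π.cycleFactorsFinset,
      Scost φ σ ≤ ∑ i ∈ σ.support, optCost φ i (π i) := by
    intro σ hσ
    obtain ⟨hcyc, happ⟩ := Equiv.Perm.mem_cycleFactorsFinset_iff.mp hσ
    have hsupp : σ.support.Nonempty := by
      rw [Finset.nonempty_iff_ne_empty, Ne, Equiv.Perm.support_eq_empty_iff]
      exact hcyc.ne_one
    obtain ⟨x, hx⟩ := hsupp
    have hsSup : 0 ≤ sSup ((fun i => optCost φ i (σ i)) '' (↑σ.support : Set (Fin n))) := by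
      have hbdd : BddAbove ((fun i => optCost φ i (σ i)) '' (↑σ.support : Set (Fin n))) :=
        (σ.support.finite_toSet.image _).bddAbove
      calc (0 : ℝ) ≤ optCost φ x (σ x) := hopt x (σ x)
        _ ≤ _ := le_csSup hbdd ⟨x, hx, rfl⟩
    have heq : ∑ i ∈ σ.support, optCost φ i (σ i) = ∑ i ∈ σ.support, optCost φ i (π i) :=
      Finset.sum_congr rfl fun i hi => by rw [happ i hi]
    calc Scost φ σ ≤ ∑ i ∈ σ.support, optCost φ i (σ i) := by
          unfold Scost; linarith
      _ = _ := heq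
  -- Step 2: sum over cycles
  have step2 : Sperm φ π ≤
      ∑ i ∈ π.cycleFactorsFinset.biUnion Equiv.Perm.support, optCost φ i (π i) := by
    rw [Finset.sum_biUnion]
    · exact Finset.sum_le_sum step1
    · intro σ hσ τ hτ hst
      exact Equiv.Perm.disjoint_iff_disjoint_support.mp
        (Equiv.Perm.cycleFactorsFinset_pairwise_disjoint π hσ hτ hst)
  have step3 : ∑ i ∈ π.cycleFactorsFinset.biUnion Equiv.Perm.support, optCost φ i (π i)
      ≤ ∑ i : Fin n, optCost φ i (π i) :=
    Finset.sum_le_sum_of_subset_of_nonneg (Finset.subset_univ _)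
      (fun i _ _ => hopt i (π i))
  have step4 : ∑ i : Fin n, optCost φ i (π i) ≤ 2 * ∑ i : Fin n, minPathCost φ i (π i) := by
    rw [Finset.mul_sum]
    exact Finset.sum_le_sum fun i _ => optCost_le_two_mul_minPathCost φ hnn i (π i)
  linarith
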